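/- Let g ∈ S_m have cycles c_1,…,c_r and h ∈ S_n. Then Δ(g,h) := n·ind(g) + m·ind(h) − ind(g,h) equals m·ind(h) if and only if ord(h) divides |c_i| for every cycle c_i of g. -/

import Mathlib

/-- The multiset of all cycle lengths of a permutation, counting fixed points as 1-cycles. -/
def fullCycleType {α : Type*} [Fintype α] [DecidableEq α] (σ : Equiv.Perm α) : Multiset ℕ :=
  σ.cycleType + Multiset.replicate (Fintype.card α - σ.support.card) 1

/-- The number of cycles of a permutation (fixed points counted as 1-cycles),
i.e. the number of orbits of the cyclic group it generates. -/
def cycleCount {α : Type*} [Fintype α] [DecidableEq α] (σ : Equiv.Perm α) : ℕ :=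
  Multiset.card (fullCycleType σ)

/-- `ind σ = N - (number of cycles of σ)` for `σ` a permutation of a set of size `N`. -/
def ind {α : Type*} [Fintype α] [DecidableEq α] (σ : Equiv.Perm α) : ℕ :=
  Fintype.card α - cycleCount σ

open Equiv Function Finset

set_option linter.unusedSectionVars false

section Aux

variable {α : Type*} [Fintype α] [DecidableEq α]

private lemma aux_pow_apply_eq_iff (σ : Equiv.Perm α) (x : α) (k : ℕ) :
    (σ ^ k) x = x ↔ Function.minimalPeriod ⇑σ x ∣ k := by
  rw [← Function.isPeriodicPt_iff_minimalPeriod_dvd]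
  simp [Function.IsPeriodicPt, Function.IsFixedPt, Equiv.Perm.iterate_eq_pow]

private lemma aux_minimalPeriod_pos (σ : Equiv.Perm α) (x : α) :
    0 < Function.minimalPeriod ⇑σ x :=
  Function.minimalPeriod_pos_of_mem_periodicPts
    ⟨orderOf σ, orderOf_pos σ, by
      simp [Function.IsPeriodicPt, Function.IsFixedPt, Equiv.Perm.iterate_eq_pow, pow_orderOf_eq_one]⟩

private lemma aux_minimalPeriod_eq_one {σ : Equiv.Perm α} {x : α} (hx : x ∉ σ.support) :
    Function.minimalPeriod ⇑σ x = 1 :=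
  Function.minimalPeriod_eq_one_iff_isFixedPt.mpr (Equiv.Perm.notMem_support.mp hx)

private lemma aux_minimalPeriod_eq_card {σ : Equiv.Perm α} {x : α} (hx : x ∈ σ.support) :
    Function.minimalPeriod ⇑σ x = (σ.cycleOf x).support.card := by
  have hx' : x ∈ (σ.cycleOf x).support :=
    (Equiv.Perm.mem_support_cycleOf_iff).mpr ⟨Equiv.Perm.SameCycle.refl _ _, hx⟩
  have h1 : (σ ^ (σ.cycleOf x).support.card) x = x :=
    (Equiv.Perm.isCycleOn_support_cycleOf σ x).pow_card_apply hx'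
  have h2 : (σ.cycleOf x).support.card ∣ Function.minimalPeriod ⇑σ x :=
    ((Equiv.Perm.isCycleOn_support_cycleOf σ x).pow_apply_eq hx').mp
      ((aux_pow_apply_eq_iff σ x _).mpr dvd_rfl)
  exact Nat.dvd_antisymm ((aux_pow_apply_eq_iff σ x _).mp h1) h2

private lemma aux_filter_cycleOf_eq (σ : Equiv.Perm α) {c : Equiv.Perm α}
    (hc : c ∈ σ.cycleFactorsFinset) :
    σ.support.filter (fun x => σ.cycleOf x = c) = c.support := by
  ext x
  simp only [mem_filter]
  constructor
  · rintro ⟨hx, rfl⟩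
    exact (Equiv.Perm.mem_support_cycleOf_iff).mpr ⟨Equiv.Perm.SameCycle.refl _ _, hx⟩
  · intro hx
    have hcx : c = σ.cycleOf x := Equiv.Perm.cycle_is_cycleOf hx hc
    have h2 := (Equiv.Perm.mem_cycleFactorsFinset_iff.mp hc).2 x hx
    refine ⟨?_, hcx.symm⟩
    rw [Equiv.Perm.mem_support] at hx ⊢
    rwa [← h2]

private lemma aux_cycleCount_eq_sum (σ : Equiv.Perm α) :
    (cycleCount σ : ℚ) = ∑ x : α, ((Function.minimalPeriod ⇑σ x : ℚ))⁻¹ := by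
  rw [← Finset.sum_add_sum_compl σ.support]
  have hfix : ∑ x ∈ σ.supportᶜ, ((Function.minimalPeriod ⇑σ x : ℚ))⁻¹
      = ((Fintype.card α - σ.support.card : ℕ) : ℚ) := by
    have h1 : ∀ x ∈ σ.supportᶜ, ((Function.minimalPeriod ⇑σ x : ℚ))⁻¹ = 1 := by
      intro x hx
      rw [aux_minimalPeriod_eq_one (Finset.mem_compl.mp hx)]
      norm_num
    rw [Finset.sum_congr rfl h1, Finset.sum_const, Finset.card_compl]
    simp
  have hsup : ∑ x ∈ σ.support, ((Function.minimalPeriod ⇑σ x : ℚ))⁻¹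
      = (σ.cycleFactorsFinset.card : ℚ) := by
    have h0 : ∀ x ∈ σ.support, ((Function.minimalPeriod ⇑σ x : ℚ))⁻¹
        = (((σ.cycleOf x).support.card : ℚ))⁻¹ := fun x hx => by
      rw [aux_minimalPeriod_eq_card hx]
    rw [Finset.sum_congr rfl h0]
    rw [← Finset.sum_fiberwise_of_maps_to
      (g := fun x => σ.cycleOf x) (t := σ.cycleFactorsFinset)
      (fun x hx => Equiv.Perm.cycleOf_mem_cycleFactorsFinset_iff.mpr hx)]
    rw [Finset.card_eq_sum_ones σ.cycleFactorsFinset]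
    push_cast
    refine Finset.sum_congr rfl (fun c hc => ?_)
    have h1 : ∀ x ∈ σ.support.filter (fun x => σ.cycleOf x = c),
        (((σ.cycleOf x).support.card : ℚ))⁻¹ = ((c.support.card : ℚ))⁻¹ := by
      intro x hx
      rw [(Finset.mem_filter.mp hx).2]
    rw [Finset.sum_congr rfl h1, aux_filter_cycleOf_eq σ hc, Finset.sum_const]
    have hpos : 0 < c.support.card :=
      Finset.card_pos.mpr (Equiv.Perm.mem_cycleFactorsFinset_iff.mp hc).1.nonempty_support
    rw [nsmul_eq_mul, mul_inv_cancel₀ (by exact_mod_cast hpos.ne')]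
  rw [hfix, hsup]
  unfold cycleCount fullCycleType
  rw [Multiset.card_add, Multiset.card_replicate, Equiv.Perm.cycleType_def,
    Multiset.card_map, ← Finset.card_def]
  push_cast
  ring

private lemma aux_mcard_le_sum (s : Multiset ℕ) (h : ∀ a ∈ s, 1 ≤ a) :
    Multiset.card s ≤ s.sum := by
  induction s using Multiset.induction_on with
  | empty => simp
  | cons a s ih =>
    simp only [Multiset.card_cons, Multiset.sum_cons]
    have h1 := h a (Multiset.mem_cons_self a s)
    have h2 := ih (fun b hb => h b (Multiset.mem_cons_of_mem hb))
    omega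

private lemma aux_card_le (σ : Equiv.Perm α) : cycleCount σ ≤ Fintype.card α := by
  have h1 : Multiset.card σ.cycleType ≤ σ.cycleType.sum :=
    aux_mcard_le_sum _ (fun a ha => by
      have := Equiv.Perm.two_le_of_mem_cycleType ha; omega)
  have h2 : σ.support.card ≤ Fintype.card α := by
    simpa using Finset.card_le_univ σ.support
  unfold cycleCount fullCycleType
  rw [Multiset.card_add, Multiset.card_replicate]
  rw [Equiv.Perm.sum_cycleType] at h1
  omega

private lemma aux_dvd_all_iff (σ : Equiv.Perm α) (d : ℕ) :
    (∀ x : α, d ∣ Function.minimalPeriod ⇑σ x) ↔ ∀ c ∈ fullCycleType σ, d ∣ c := by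
  constructor
  · intro H c hc
    rcases Multiset.mem_add.mp hc with hc | hc
    · rw [Equiv.Perm.cycleType_def, Multiset.mem_map] at hc
      obtain ⟨cc, hcc, rfl⟩ := hc
      rw [← Finset.mem_def] at hcc
      obtain ⟨x, hx⟩ := (Equiv.Perm.mem_cycleFactorsFinset_iff.mp hcc).1.nonempty_support
      rw [← aux_filter_cycleOf_eq σ hcc, Finset.mem_filter] at hx
      have := aux_minimalPeriod_eq_card hx.1
      rw [hx.2] at this
      simpa [Function.comp, ← this] using H x
    · obtain ⟨hk, rfl⟩ := Multiset.mem_replicate.mp hc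
      -- there is a fixed point
      have hlt : σ.support.card < Fintype.card α := by
        have h2 : σ.support.card ≤ Fintype.card α := by
          simpa using Finset.card_le_univ σ.support
        omega
      have : σ.support ≠ Finset.univ := by
        intro he
        rw [he] at hlt
        simp at hlt
      obtain ⟨x, hx⟩ : ∃ x, x ∉ σ.support := by
        by_contra hco
        push_neg at hco
        exact this (Finset.eq_univ_iff_forall.mpr hco)
      have := H x
      rwa [aux_minimalPeriod_eq_one hx] at this
  · intro H x
    by_cases hx : x ∈ σ.support
    · rw [aux_minimalPeriod_eq_card hx]
      refine H _ (Multiset.mem_add.mpr (Or.inl ?_))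
      rw [Equiv.Perm.cycleType_def, Multiset.mem_map]
      exact ⟨σ.cycleOf x, Equiv.Perm.cycleOf_mem_cycleFactorsFinset_iff.mpr hx, rfl⟩
    · rw [aux_minimalPeriod_eq_one hx]
      refine H 1 (Multiset.mem_add.mpr (Or.inr (Multiset.mem_replicate.mpr ⟨?_, rfl⟩)))
      have : σ.support.card < Fintype.card α := by
        refine Finset.card_lt_card ⟨Finset.subset_univ _, fun hsub => hx (hsub (Finset.mem_univ x))⟩
          |>.trans_le ?_
        simp
      omega

end Aux

private lemma aux_key {m n : ℕ} (g : Equiv.Perm (Fin m)) (h : Equiv.Perm (Fin n)) :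
    cycleCount (g.prodCongr h) = n * cycleCount g ↔
      ∀ (x : Fin m) (y : Fin n),
        Function.minimalPeriod ⇑h y ∣ Function.minimalPeriod ⇑g x := by
  rw [← Nat.cast_inj (R := ℚ)]
  have hco : ⇑(g.prodCongr h) = Prod.map ⇑g ⇑h := by
    funext z
    cases z
    rfl
  rw [aux_cycleCount_eq_sum, hco]
  have hR : ((n * cycleCount g : ℕ) : ℚ)
      = ∑ z : Fin m × Fin n, ((Function.minimalPeriod ⇑g z.1 : ℚ))⁻¹ := by
    rw [Fintype.sum_prod_type]
    push_cast
    rw [aux_cycleCount_eq_sum, Finset.mul_sum]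
    refine Finset.sum_congr rfl (fun x _ => ?_)
    rw [Finset.sum_const]
    simp [mul_comm]
  rw [hR]
  have hle : ∀ z ∈ (Finset.univ : Finset (Fin m × Fin n)),
      ((Function.minimalPeriod ⇑g z.1 : ℚ))⁻¹
        ≤ ((Function.minimalPeriod (Prod.map ⇑g ⇑h) z : ℚ))⁻¹ → True := fun _ _ _ => trivial
  have key : ∀ z : Fin m × Fin n,
      ((Function.minimalPeriod (Prod.map ⇑g ⇑h) z : ℚ))⁻¹
        ≤ ((Function.minimalPeriod ⇑g z.1 : ℚ))⁻¹ := by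
    intro z
    rw [Function.minimalPeriod_prodMap]
    have h1 : 0 < Function.minimalPeriod ⇑g z.1 := aux_minimalPeriod_pos g z.1
    have h3 : Function.minimalPeriod ⇑g z.1
        ≤ Nat.lcm (Function.minimalPeriod ⇑g z.1) (Function.minimalPeriod ⇑h z.2) :=
      Nat.le_of_dvd (Nat.pos_of_ne_zero (Nat.lcm_ne_zero h1.ne'
        (aux_minimalPeriod_pos h z.2).ne')) (Nat.dvd_lcm_left _ _)
    gcongr
  rw [Finset.sum_eq_sum_iff_of_le (fun z _ => key z)]
  constructor
  · intro H x y
    have := H (x, y) (Finset.mem_univ _)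
    rw [Function.minimalPeriod_prodMap] at this
    have h1 : Function.minimalPeriod (⇑g) x
        = Nat.lcm (Function.minimalPeriod ⇑g x) (Function.minimalPeriod ⇑h y) := by
      exact_mod_cast inv_inj.mp this.symm
    exact h1 ▸ Nat.dvd_lcm_right _ _
  · intro H z _
    rw [Function.minimalPeriod_prodMap]
    congr 2
    exact Nat.dvd_antisymm (Nat.lcm_dvd dvd_rfl (H z.1 z.2)) (Nat.dvd_lcm_left _ _)

theorem stmt_6 {m n : ℕ} (g : Equiv.Perm (Fin m)) (h : Equiv.Perm (Fin n)) :
    (n : ℤ) * ind g + (m : ℤ) * ind h - ind (g.prodCongr h) = (m : ℤ) * ind h ↔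
    ∀ c ∈ fullCycleType g, orderOf h ∣ c := by
  have hg := aux_card_le g
  have hh := aux_card_le h
  have hgh := aux_card_le (g.prodCongr h)
  rw [Fintype.card_fin] at hg hh
  rw [Fintype.card_prod, Fintype.card_fin, Fintype.card_fin] at hgh
  have e1 : (ind g : ℤ) = m - cycleCount g := by
    unfold ind; rw [Fintype.card_fin]; push_cast [hg]; ring
  have e2 : (ind h : ℤ) = n - cycleCount h := by
    unfold ind; rw [Fintype.card_fin]; push_cast [hh]; ring
  have e3 : (ind (g.prodCongr h) : ℤ) = m * n - cycleCount (g.prodCongr h) := by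
    unfold ind; rw [Fintype.card_prod, Fintype.card_fin, Fintype.card_fin]
    push_cast [hgh]; ring
  rw [e1, e2, e3]
  have step1 : ((n : ℤ) * ((m : ℤ) - cycleCount g) + (m : ℤ) * ((n : ℤ) - cycleCount h)
      - ((m : ℤ) * n - cycleCount (g.prodCongr h)) = (m : ℤ) * ((n : ℤ) - cycleCount h))
      ↔ cycleCount (g.prodCongr h) = n * cycleCount g := by
    rw [show (cycleCount (g.prodCongr h) = n * cycleCount g)
        ↔ ((cycleCount (g.prodCongr h) : ℤ) = (n : ℤ) * cycleCount g) by
      constructor <;> intro hx <;> exact_mod_cast hx]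
    constructor <;> intro hx <;> linarith
  rw [step1, aux_key g h]
  -- now bridge
  have step2 : (∀ (x : Fin m) (y : Fin n),
      Function.minimalPeriod ⇑h y ∣ Function.minimalPeriod ⇑g x)
      ↔ ∀ x : Fin m, orderOf h ∣ Function.minimalPeriod ⇑g x := by
    refine forall_congr' (fun x => ?_)
    rw [orderOf_dvd_iff_pow_eq_one, Equiv.ext_iff]
    constructor
    · intro H y
      rw [Equiv.Perm.one_apply]
      exact (aux_pow_apply_eq_iff h y _).mpr (H y)
    · intro H y
      have hy := H y
      rw [Equiv.Perm.one_apply] at hy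
      exact (aux_pow_apply_eq_iff h y _).mp hy
  rw [step2]
  constructor
  · intro H
    exact (aux_dvd_all_iff g (orderOf h)).mp H
  · intro H
    exact (aux_dvd_all_iff g (orderOf h)).mpr H
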